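/- Let r ≥ 0 be a natural number, f : [0,1] → ℝ be r-times continuously differentiable, n ≥ 1 a natural number, and 0 < q < p ≤ 1. Then for every x ∈ [0,1]: |B^{[r]}_{n,p,q}(f; x) − f(x)| ≤ (1/r!) · ω(f^{(r)}; [n]_{p,q}^{−1/2}) · ( [n]_{p,q}^{1/2} · B_{n,p,q}(|t−x|^{r+1}; x) + B_{n,p,q}(|t−x|^{r}; x) ). -/

import Mathlib

open Finset Set

/-- The `(p,q)`-integer `[k]_{p,q} = (p^k - q^k)/(p - q)` (so `[0]_{p,q} = 0`). -/
noncomputable def pqInt (p q : ℝ) (k : ℕ) : ℝ := (p ^ k - q ^ k) / (p - q)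

/-- The `(p,q)`-factorial `[k]_{p,q}! = ∏_{j=1}^k [j]_{p,q}` (`[0]_{p,q}! = 1`). -/
noncomputable def pqFact (p q : ℝ) (k : ℕ) : ℝ := ∏ j ∈ Finset.range k, pqInt p q (j + 1)

/-- The `(p,q)`-binomial coefficient. -/
noncomputable def pqBinom (p q : ℝ) (n k : ℕ) : ℝ :=
  pqFact p q n / (pqFact p q k * pqFact p q (n - k))

/-- The `(p,q)`-Bernstein basis function
`P_{n,k}(p,q;x) = p^{k(k-1)/2} [n choose k]_{p,q} x^k ∏_{s=0}^{n-k-1} (p^s - q^s x)`. -/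
noncomputable def pqBern (p q : ℝ) (n k : ℕ) (x : ℝ) : ℝ :=
  p ^ (k * (k - 1) / 2) * pqBinom p q n k * x ^ k *
    ∏ s ∈ Finset.range (n - k), (p ^ s - q ^ s * x)

/-- The node `x_{n,k} = p^{n-k} [k]_{p,q} / [n]_{p,q}`. -/
noncomputable def pqNode (p q : ℝ) (n k : ℕ) : ℝ := p ^ (n - k) * pqInt p q k / pqInt p q n

/-- The `(p,q)`-power central moment
`B_{n,p,q}((t-a)^m_{p,q}; y) = p^{-n(n-1)/2} ∑_{k=0}^n (∏_{s=0}^{m-1}(p^s x_{n,k} - q^s a)) P_{n,k}(p,q;y)`. -/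
noncomputable def pqPowMoment (p q : ℝ) (n m : ℕ) (a y : ℝ) : ℝ :=
  (p ^ (n * (n - 1) / 2))⁻¹ *
    ∑ k ∈ Finset.range (n + 1),
      (∏ s ∈ Finset.range m, (p ^ s * pqNode p q n k - q ^ s * a)) * pqBern p q n k y

/-- The `m`-th absolute central moment
`B_{n,p,q}(|t-x|^m; x) = p^{-n(n-1)/2} ∑_{k=0}^n |x_{n,k} - x|^m P_{n,k}(p,q;x)`. -/
noncomputable def pqAbsMoment (p q : ℝ) (n m : ℕ) (x : ℝ) : ℝ :=
  (p ^ (n * (n - 1) / 2))⁻¹ *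
    ∑ k ∈ Finset.range (n + 1), |pqNode p q n k - x| ^ m * pqBern p q n k x

/-- The ordinary `m`-th central moment
`B_{n,p,q}((t-x)^m; x) = p^{-n(n-1)/2} ∑_{k=0}^n (x_{n,k} - x)^m P_{n,k}(p,q;x)`. -/
noncomputable def pqMoment (p q : ℝ) (n m : ℕ) (x : ℝ) : ℝ :=
  (p ^ (n * (n - 1) / 2))⁻¹ *
    ∑ k ∈ Finset.range (n + 1), (pqNode p q n k - x) ^ m * pqBern p q n k x

/-- The `(p,q)`-Bernstein operator `B_{n,p,q}(f;x)`. -/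
noncomputable def pqBernstein (p q : ℝ) (n : ℕ) (f : ℝ → ℝ) (x : ℝ) : ℝ :=
  (p ^ (n * (n - 1) / 2))⁻¹ *
    ∑ k ∈ Finset.range (n + 1), f (pqNode p q n k) * pqBern p q n k x

/-- The `r`-th order generalization `B^{[r]}_{n,p,q}(f;x)` where `f^{(i)}` is interpreted as
`iteratedDerivWithin i f (Set.Icc 0 1)`. -/
noncomputable def pqBernsteinR (p q : ℝ) (n r : ℕ) (f : ℝ → ℝ) (x : ℝ) : ℝ :=
  (p ^ (n * (n - 1) / 2))⁻¹ *
    ∑ k ∈ Finset.range (n + 1), pqBern p q n k x *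
      ∑ i ∈ Finset.range (r + 1),
        iteratedDerivWithin i f (Set.Icc 0 1) (pqNode p q n k) / (i.factorial : ℝ) *
          (x - pqNode p q n k) ^ i

/-- The modulus of continuity on `[0,1]`:
`ω(g; δ) = sup { |g u - g v| : u, v ∈ [0,1], |u - v| ≤ δ }`. -/
noncomputable def modulusOfContinuity (g : ℝ → ℝ) (δ : ℝ) : ℝ :=
  sSup {d : ℝ | ∃ u ∈ Set.Icc (0 : ℝ) 1, ∃ v ∈ Set.Icc (0 : ℝ) 1, |u - v| ≤ δ ∧ d = |g u - g v|}

lemma tri_succ (j : ℕ) : j * (j - 1) / 2 + j = j * (j + 1) / 2 := by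
  have h : j * (j + 1) = j * (j - 1) + 2 * j := by
    cases j with
    | zero => rfl
    | succ m => simp [Nat.succ_sub_one]; ring
  rw [h, Nat.add_mul_div_left _ _ (by norm_num : (0:ℕ) < 2)]

section alg
variable {p q : ℝ} (hq : 0 < q) (hqp : q < p)
include hq hqp

lemma pqInt_pos {k : ℕ} (hk : 1 ≤ k) : 0 < pqInt p q k := by
  have h1 : q ^ k < p ^ k := pow_lt_pow_left₀ hqp hq.le (by omega)
  exact div_pos (by linarith) (by linarith)

lemma pqInt_nonneg (k : ℕ) : 0 ≤ pqInt p q k := by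
  rcases Nat.eq_zero_or_pos k with h | h
  · simp [h, pqInt]
  · exact (pqInt_pos hq hqp h).le

lemma pqFact_pos (k : ℕ) : 0 < pqFact p q k := by
  apply Finset.prod_pos
  intro j _
  exact pqInt_pos hq hqp (by omega)

lemma pqBinom_pos (n k : ℕ) : 0 < pqBinom p q n k :=
  div_pos (pqFact_pos hq hqp n) (mul_pos (pqFact_pos hq hqp k) (pqFact_pos hq hqp _))

lemma pqBinom_zero (m : ℕ) : pqBinom p q m 0 = 1 := by
  rw [pqBinom, show pqFact p q 0 = 1 from by simp [pqFact]]
  rw [Nat.sub_zero, one_mul, div_self (pqFact_pos hq hqp m).ne']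

lemma pqBinom_self (m : ℕ) : pqBinom p q m m = 1 := by
  rw [pqBinom, Nat.sub_self, show pqFact p q 0 = 1 from by simp [pqFact]]
  rw [mul_one, div_self (pqFact_pos hq hqp m).ne']

lemma pqInt_add (j m : ℕ) : pqInt p q (j + m) = p ^ j * pqInt p q m + q ^ m * pqInt p q j := by
  have hpq : p - q ≠ 0 := by linarith
  simp only [pqInt, pow_add]
  field_simp
  ring

lemma pqPascal {n j : ℕ} (hj1 : 1 ≤ j) (hjn : j ≤ n) :
    pqBinom p q (n + 1) j = p ^ j * pqBinom p q n j + q ^ (n + 1 - j) * pqBinom p q n (j - 1) := by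
  have h1 : pqFact p q (n + 1) = pqFact p q n * pqInt p q (n + 1) := Finset.prod_range_succ _ _
  have h2 : pqFact p q (n + 1 - j) = pqFact p q (n - j) * pqInt p q (n + 1 - j) := by
    rw [show n + 1 - j = (n - j) + 1 by omega, pqFact, Finset.prod_range_succ, ← pqFact]
  have h3 : pqFact p q j = pqFact p q (j - 1) * pqInt p q j := by
    conv_lhs => rw [show j = (j - 1) + 1 by omega]
    rw [pqFact, Finset.prod_range_succ, ← pqFact, show j - 1 + 1 = j by omega]
  have h4 : pqInt p q (n + 1) = p ^ j * pqInt p q (n + 1 - j) + q ^ (n + 1 - j) * pqInt p q j := by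
    have h := pqInt_add hq hqp (p := p) (q := q) j (n + 1 - j)
    rw [show j + (n + 1 - j) = n + 1 by omega] at h
    rw [h]
  have h5 : n - (j - 1) = n + 1 - j := by omega
  have e1 : pqFact p q (j - 1) ≠ 0 := (pqFact_pos hq hqp _).ne'
  have e2 : pqFact p q (n - j) ≠ 0 := (pqFact_pos hq hqp _).ne'
  have e3 : pqInt p q j ≠ 0 := (pqInt_pos hq hqp hj1).ne'
  have e4 : pqInt p q (n + 1 - j) ≠ 0 := (pqInt_pos hq hqp (by omega)).ne'
  rw [pqBinom, pqBinom, pqBinom, h1, h3, h5, h2, h4]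
  field_simp

lemma sum_pqBern (n : ℕ) (x : ℝ) :
    ∑ k ∈ Finset.range (n + 1), pqBern p q n k x = p ^ (n * (n - 1) / 2) := by
  induction n with
  | zero => simp [pqBern, pqBinom, pqFact]
  | succ n ih =>
      set A : ℕ → ℝ := fun k =>
        p ^ (k * (k + 1) / 2) * pqBinom p q n k * x ^ k *
          ∏ s ∈ Finset.range (n + 1 - k), (p ^ s - q ^ s * x) with hA
      set B : ℕ → ℝ := fun k =>
        p ^ (k * (k + 1) / 2) * q ^ (n - k) * pqBinom p q n k * x ^ (k + 1) *
          ∏ s ∈ Finset.range (n - k), (p ^ s - q ^ s * x) with hB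
      have hsplit : ∀ k ∈ Finset.range n, pqBern p q (n + 1) (k + 1) x = A (k + 1) + B k := by
        intro k hk
        rw [Finset.mem_range] at hk
        have hP := pqPascal (p := p) (q := q) hq hqp (n := n) (j := k + 1) (by omega) (by omega)
        rw [Nat.add_sub_cancel] at hP
        rw [pqBern, hP, hA, hB]
        simp only []
        rw [show (k + 1) * (k + 1 - 1) / 2 = k * (k + 1) / 2 by
          rw [Nat.add_sub_cancel, Nat.mul_comm]]
        rw [show n + 1 - (k + 1) = n - k by omega]
        have hexp : p ^ ((k + 1) * (k + 1 + 1) / 2) = p ^ (k * (k + 1) / 2) * p ^ (k + 1) := by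
          rw [← pow_add]
          congr 1
          have h := tri_succ (k + 1)
          rw [Nat.add_sub_cancel, Nat.mul_comm (k+1) k] at h
          omega
        rw [hexp]
        ring
      have hfirst : pqBern p q (n + 1) 0 x = A 0 := by
        rw [pqBern, hA]
        simp only []
        rw [pqBinom_zero hq hqp, pqBinom_zero hq hqp]
      have hlast : pqBern p q (n + 1) (n + 1) x = B n := by
        rw [pqBern, hB]
        simp only []
        rw [pqBinom_self hq hqp, pqBinom_self hq hqp, Nat.sub_self, Nat.add_sub_cancel]
        rw [show (n + 1) * n / 2 = n * (n + 1) / 2 by rw [Nat.mul_comm]]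
        norm_num
      have hAB : ∀ k ∈ Finset.range (n + 1), A k + B k = p ^ n * pqBern p q n k x := by
        intro k hk
        rw [Finset.mem_range] at hk
        have hprod : ∏ s ∈ Finset.range (n + 1 - k), (p ^ s - q ^ s * x) =
            (∏ s ∈ Finset.range (n - k), (p ^ s - q ^ s * x)) * (p ^ (n - k) - q ^ (n - k) * x) := by
          rw [show n + 1 - k = (n - k) + 1 by omega, Finset.prod_range_succ]
        have hexp2 : p ^ (k * (k + 1) / 2) * p ^ (n - k) = p ^ n * p ^ (k * (k - 1) / 2) := by
          rw [← pow_add, ← pow_add]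
          congr 1
          have h := tri_succ k
          generalize k * (k - 1) / 2 = a at *
          generalize k * (k + 1) / 2 = b at *
          omega
        rw [hA, hB]
        simp only []
        rw [hprod, pqBern]
        calc p ^ (k * (k + 1) / 2) * pqBinom p q n k * x ^ k *
              ((∏ s ∈ Finset.range (n - k), (p ^ s - q ^ s * x)) * (p ^ (n - k) - q ^ (n - k) * x)) +
            p ^ (k * (k + 1) / 2) * q ^ (n - k) * pqBinom p q n k * x ^ (k + 1) *
              ∏ s ∈ Finset.range (n - k), (p ^ s - q ^ s * x)
            = (p ^ (k * (k + 1) / 2) * p ^ (n - k)) * pqBinom p q n k * x ^ k *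
              ∏ s ∈ Finset.range (n - k), (p ^ s - q ^ s * x) := by ring
          _ = _ := by rw [hexp2]; ring
      calc ∑ k ∈ Finset.range (n + 1 + 1), pqBern p q (n + 1) k x
          = (∑ k ∈ Finset.range (n + 1), pqBern p q (n + 1) k x) + pqBern p q (n+1) (n+1) x :=
            Finset.sum_range_succ _ _
        _ = ((∑ k ∈ Finset.range n, pqBern p q (n + 1) (k + 1) x) + pqBern p q (n+1) 0 x)
              + pqBern p q (n+1) (n+1) x := by rw [Finset.sum_range_succ']
        _ = ((∑ k ∈ Finset.range n, (A (k + 1) + B k)) + A 0) + B n := by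
            rw [Finset.sum_congr rfl hsplit, hfirst, hlast]
        _ = ((∑ k ∈ Finset.range n, A (k + 1)) + A 0) + ((∑ k ∈ Finset.range n, B k) + B n) := by
            rw [Finset.sum_add_distrib]; ring
        _ = (∑ k ∈ Finset.range (n + 1), A k) + (∑ k ∈ Finset.range (n + 1), B k) := by
            rw [Finset.sum_range_succ', Finset.sum_range_succ]
        _ = ∑ k ∈ Finset.range (n + 1), (A k + B k) := (Finset.sum_add_distrib).symm
        _ = ∑ k ∈ Finset.range (n + 1), p ^ n * pqBern p q n k x := Finset.sum_congr rfl hAB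
        _ = p ^ n * ∑ k ∈ Finset.range (n + 1), pqBern p q n k x := (Finset.mul_sum _ _ _).symm
        _ = p ^ n * p ^ (n * (n - 1) / 2) := by rw [ih]
        _ = p ^ ((n + 1) * (n + 1 - 1) / 2) := by
            rw [← pow_add]
            congr 1
            have h := tri_succ n
            rw [Nat.add_sub_cancel, Nat.mul_comm (n+1) n]
            generalize n * (n - 1) / 2 = a at *
            generalize n * (n + 1) / 2 = b at *
            omega

end alg


section moc
variable {g : ℝ → ℝ} {C : ℝ} (hC : ∀ u ∈ Set.Icc (0:ℝ) 1, |g u| ≤ C)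
include hC

lemma moc_bddAbove (δ : ℝ) :
    BddAbove {d : ℝ | ∃ u ∈ Set.Icc (0 : ℝ) 1, ∃ v ∈ Set.Icc (0 : ℝ) 1,
      |u - v| ≤ δ ∧ d = |g u - g v|} := by
  refine ⟨C + C, ?_⟩
  rintro d ⟨u, hu, v, hv, -, rfl⟩
  calc |g u - g v| ≤ |g u| + |g v| := abs_sub _ _
    _ ≤ C + C := add_le_add (hC u hu) (hC v hv)

lemma moc_le {u v δ : ℝ} (hu : u ∈ Set.Icc (0:ℝ) 1) (hv : v ∈ Set.Icc (0:ℝ) 1)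
    (hd : |u - v| ≤ δ) : |g u - g v| ≤ modulusOfContinuity g δ :=
  le_csSup (moc_bddAbove hC δ) ⟨u, hu, v, hv, hd, rfl⟩

lemma moc_nonneg {δ : ℝ} (hδ : 0 ≤ δ) : 0 ≤ modulusOfContinuity g δ := by
  have h := moc_le hC (u := 0) (v := 0) (δ := δ) (by norm_num) (by norm_num) (by simpa using hδ)
  simpa using h

lemma moc_chain {δ u v : ℝ} (hδ : 0 < δ) (hu : u ∈ Set.Icc (0:ℝ) 1)
    (hv : v ∈ Set.Icc (0:ℝ) 1) :
    |g u - g v| ≤ (1 + |u - v| / δ) * modulusOfContinuity g δ := by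
  set d : ℝ := |u - v| with hdd
  have hd0 : 0 ≤ d := abs_nonneg _
  set m : ℕ := max 1 ⌈d / δ⌉₊ with hm
  have hm1 : 1 ≤ m := le_max_left _ _
  have hm0 : (0:ℝ) < (m:ℝ) := by exact_mod_cast hm1
  have hm2 : (m : ℝ) ≤ 1 + d / δ := by
    have hdq : 0 ≤ d / δ := div_nonneg hd0 hδ.le
    rcases le_or_gt ⌈d / δ⌉₊ 1 with h | h
    · have : m = 1 := by omega
      rw [this]; push_cast; linarith
    · have : m = ⌈d / δ⌉₊ := by omega
      rw [this]
      have := Nat.ceil_lt_add_one hdq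
      linarith
  have hdm : (⌈d / δ⌉₊ : ℝ) ≤ (m : ℝ) := by exact_mod_cast le_max_right _ _
  have hm3 : d / (m:ℝ) ≤ δ := by
    rw [div_le_iff₀ hm0]
    have h1 : d / δ ≤ (m:ℝ) := le_trans (Nat.le_ceil _) hdm
    calc d = (d / δ) * δ := by field_simp
      _ ≤ (m:ℝ) * δ := by nlinarith
      _ = δ * (m:ℝ) := by ring
    
  set t : ℕ → ℝ := fun j => u + (j:ℝ) * ((v - u) / (m:ℝ)) with ht
  have htmem : ∀ j : ℕ, j ≤ m → t j ∈ Set.Icc (0:ℝ) 1 := by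
    intro j hj
    have hj0 : (0:ℝ) ≤ (j:ℝ)/(m:ℝ) := by positivity
    have hj1 : (j:ℝ)/(m:ℝ) ≤ 1 := by
      rw [div_le_one hm0]; exact_mod_cast hj
    have he : t j = (1 - (j:ℝ)/(m:ℝ)) * u + ((j:ℝ)/(m:ℝ)) * v := by
      rw [ht]; field_simp; ring
    constructor
    · rw [he]
      have := mul_nonneg (by linarith : (0:ℝ) ≤ 1 - (j:ℝ)/(m:ℝ)) hu.1
      have := mul_nonneg hj0 hv.1
      linarith
    · rw [he]
      have h1 : (1 - (j:ℝ)/(m:ℝ)) * u ≤ (1 - (j:ℝ)/(m:ℝ)) * 1 :=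
        mul_le_mul_of_nonneg_left hu.2 (by linarith)
      have h2 : ((j:ℝ)/(m:ℝ)) * v ≤ ((j:ℝ)/(m:ℝ)) * 1 :=
        mul_le_mul_of_nonneg_left hv.2 hj0
      linarith
  have htel : g u - g v = ∑ j ∈ Finset.range m, (g (t j) - g (t (j+1))) := by
    rw [Finset.sum_range_sub' (fun j => g (t j)) m]
    congr 1
    · rw [ht]; norm_num
    · rw [ht]
      congr 1
      field_simp
      ring
  have hstep : ∀ j ∈ Finset.range m, |g (t j) - g (t (j+1))| ≤ modulusOfContinuity g δ := by
    intro j hj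
    rw [Finset.mem_range] at hj
    apply moc_le hC (htmem j (by omega)) (htmem (j+1) (by omega))
    have : t j - t (j + 1) = -((v - u) / (m:ℝ)) := by rw [ht]; push_cast; ring
    rw [this, abs_neg, abs_div, Nat.abs_cast, show |v - u| = d by rw [hdd, abs_sub_comm]]
    exact hm3
  calc |g u - g v| = |∑ j ∈ Finset.range m, (g (t j) - g (t (j+1)))| := by rw [htel]
    _ ≤ ∑ j ∈ Finset.range m, |g (t j) - g (t (j+1))| := Finset.abs_sum_le_sum_abs _ _
    _ ≤ ∑ j ∈ Finset.range m, modulusOfContinuity g δ := Finset.sum_le_sum hstep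
    _ = (m:ℝ) * modulusOfContinuity g δ := by rw [Finset.sum_const, Finset.card_range]; ring
    _ ≤ (1 + d / δ) * modulusOfContinuity g δ :=
        mul_le_mul_of_nonneg_right hm2 (moc_nonneg hC hδ.le)

end moc

lemma iteratedDerivWithin_subset' {f : ℝ → ℝ} {s t : Set ℝ} {m i : ℕ} (hst : s ⊆ t)
    (hs : UniqueDiffOn ℝ s) (ht : UniqueDiffOn ℝ t) (hf : ContDiffOn ℝ m f t) (hi : i ≤ m)
    {x : ℝ} (hx : x ∈ s) : iteratedDerivWithin i f s x = iteratedDerivWithin i f t x := by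
  have H := ((hf.ftaylorSeriesWithin ht).mono hst).eq_iteratedFDerivWithin_of_uniqueDiffOn
    (by exact_mod_cast hi) hs hx
  rw [iteratedDerivWithin_eq_iteratedFDerivWithin, iteratedDerivWithin_eq_iteratedFDerivWithin,
    ← H]
  rfl

lemma keyA {f : ℝ → ℝ} {r : ℕ} (hf : ContDiffOn ℝ r f (Set.Icc 0 1))
    {C : ℝ} (hC : ∀ u ∈ Set.Icc (0:ℝ) 1, |iteratedDerivWithin r f (Set.Icc 0 1) u| ≤ C)
    {δ : ℝ} (hδ : 0 < δ) {a x : ℝ} (ha : a ∈ Set.Icc (0:ℝ) 1) (hx : x ∈ Set.Icc (0:ℝ) 1)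
    (hax : a ≤ x) :
    |f x - ∑ i ∈ Finset.range (r+1),
        iteratedDerivWithin i f (Set.Icc 0 1) a / (i.factorial : ℝ) * (x - a)^i| ≤
      (1 + |x - a| / δ) * modulusOfContinuity (iteratedDerivWithin r f (Set.Icc 0 1)) δ
        * |x - a|^r / (r.factorial : ℝ) := by
  have hω0 : 0 ≤ modulusOfContinuity (iteratedDerivWithin r f (Set.Icc 0 1)) δ :=
    moc_nonneg hC hδ.le
  rcases eq_or_lt_of_le hax with rfl | hax'
  · have hsum : ∑ i ∈ Finset.range (r+1),
        iteratedDerivWithin i f (Set.Icc 0 1) a / (i.factorial : ℝ) * (a - a)^i = f a := by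
      rw [Finset.sum_eq_single_of_mem 0 (Finset.mem_range.2 (by omega))]
      · simp [iteratedDerivWithin_zero]
      · intro b _ hb
        simp [zero_pow hb]
    rw [hsum, sub_self, abs_zero]
    positivity
  · rcases Nat.eq_zero_or_pos r with rfl | hr
    · have h := moc_chain hC hδ hx ha
      rw [iteratedDerivWithin_zero] at h
      simp only [zero_add, Finset.range_one, Finset.sum_singleton, pow_zero, mul_one,
        Nat.factorial_zero, Nat.cast_one, div_one, iteratedDerivWithin_zero]
      exact h
    · obtain ⟨m, rfl⟩ : ∃ m, r = m + 1 := ⟨r - 1, by omega⟩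
      have hsub : Set.Icc a x ⊆ Set.Icc (0:ℝ) 1 := Set.Icc_subset_Icc ha.1 hx.2
      have hu1 : UniqueDiffOn ℝ (Set.Icc a x) := uniqueDiffOn_Icc hax'
      have hu2 : UniqueDiffOn ℝ (Set.Icc (0:ℝ) 1) := uniqueDiffOn_Icc one_pos
      have hfs : ContDiffOn ℝ m f (Set.Icc a x) :=
        (hf.mono hsub).of_le (by exact_mod_cast Nat.le_succ m)
      have hdiff : DifferentiableOn ℝ (iteratedDerivWithin m f (Set.Icc a x)) (Set.Ioo a x) :=
        ((hf.mono hsub).differentiableOn_iteratedDerivWithin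
          (by exact_mod_cast Nat.lt_succ_self m) hu1).mono Set.Ioo_subset_Icc_self
      obtain ⟨ξ, hξ, hR⟩ := taylor_mean_remainder_lagrange hax'.ne
        (by rwa [Set.uIcc_of_le hax'.le])
        (by rwa [Set.uIcc_of_le hax'.le, Set.uIoo_of_le hax'.le])
      rw [Set.uIoo_of_le hax'.le] at hξ
      rw [Set.uIcc_of_le hax'.le] at hR
      have hξI : ξ ∈ Set.Icc (0:ℝ) 1 := hsub (Set.Ioo_subset_Icc_self hξ)
      have haI : a ∈ Set.Icc a x := Set.left_mem_Icc.2 hax'.le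
      have hT : taylorWithinEval f m (Set.Icc a x) a x =
          ∑ i ∈ Finset.range (m+1),
            iteratedDerivWithin i f (Set.Icc 0 1) a / (i.factorial : ℝ) * (x - a)^i := by
        rw [taylor_within_apply]
        refine Finset.sum_congr rfl fun i hi => ?_
        rw [Finset.mem_range] at hi
        rw [iteratedDerivWithin_subset' hsub hu1 hu2 hf (by omega) haI]
        rw [smul_eq_mul]
        ring
      have hder : iteratedDerivWithin (m+1) f (Set.Icc a x) ξ =
          iteratedDerivWithin (m+1) f (Set.Icc 0 1) ξ :=
        iteratedDerivWithin_subset' hsub hu1 hu2 hf le_rfl (Set.Ioo_subset_Icc_self hξ)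
      have hkey : f x - ∑ i ∈ Finset.range (m+1+1),
          iteratedDerivWithin i f (Set.Icc 0 1) a / (i.factorial : ℝ) * (x - a)^i
          = (iteratedDerivWithin (m+1) f (Set.Icc 0 1) ξ
              - iteratedDerivWithin (m+1) f (Set.Icc 0 1) a)
            * (x - a)^(m+1) / ((m+1).factorial : ℝ) := by
        rw [Finset.sum_range_succ, ← hT]
        have : f x - taylorWithinEval f m (Set.Icc a x) a x =
            iteratedDerivWithin (m+1) f (Set.Icc 0 1) ξ * (x - a)^(m+1)
              / ((m+1).factorial : ℝ) := by rw [← hder]; exact_mod_cast hR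
        have hfac : ((m+1).factorial : ℝ) ≠ 0 := by positivity
        field_simp at this ⊢
        linarith [this]
      rw [hkey]
      have hchain : |iteratedDerivWithin (m+1) f (Set.Icc 0 1) ξ
          - iteratedDerivWithin (m+1) f (Set.Icc 0 1) a|
          ≤ (1 + |x - a| / δ) *
            modulusOfContinuity (iteratedDerivWithin (m+1) f (Set.Icc 0 1)) δ := by
        refine le_trans (moc_chain hC hδ hξI ha) ?_
        have h1 : |ξ - a| ≤ |x - a| := by
          rw [abs_of_nonneg (by linarith [hξ.1] : (0:ℝ) ≤ ξ - a),
            abs_of_nonneg (by linarith : (0:ℝ) ≤ x - a)]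
          linarith [hξ.2]
        have h2 : |ξ - a| / δ ≤ |x - a| / δ := by gcongr
        nlinarith [hω0]
      have habs : |(iteratedDerivWithin (m+1) f (Set.Icc 0 1) ξ
            - iteratedDerivWithin (m+1) f (Set.Icc 0 1) a)
          * (x - a)^(m+1) / ((m+1).factorial : ℝ)|
          = |iteratedDerivWithin (m+1) f (Set.Icc 0 1) ξ
            - iteratedDerivWithin (m+1) f (Set.Icc 0 1) a|
            * |x - a|^(m+1) / ((m+1).factorial : ℝ) := by
        rw [abs_div, abs_mul, abs_pow, Nat.abs_cast]
      rw [habs]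
      gcongr

lemma reflect_iter {f : ℝ → ℝ} {r : ℕ} (hf : ContDiffOn ℝ r f (Set.Icc 0 1)) :
    ∀ i, i ≤ r → ∀ t ∈ Set.Icc (0:ℝ) 1,
      iteratedDerivWithin i (fun s => f (1 - s)) (Set.Icc 0 1) t
        = (-1)^i * iteratedDerivWithin i f (Set.Icc 0 1) (1 - t) := by
  have hu : UniqueDiffOn ℝ (Set.Icc (0:ℝ) 1) := uniqueDiffOn_Icc one_pos
  intro i
  induction i with
  | zero => intro _ t _; simp [iteratedDerivWithin_zero]
  | succ i ih =>
      intro hir t ht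
      have hmem : (1:ℝ) - t ∈ Set.Icc (0:ℝ) 1 :=
        Set.mem_Icc.2 ⟨by linarith [(Set.mem_Icc.1 ht).2], by linarith [(Set.mem_Icc.1 ht).1]⟩
      rw [iteratedDerivWithin_succ]
      have hEq : Set.EqOn (iteratedDerivWithin i (fun s => f (1 - s)) (Set.Icc 0 1))
          (fun u => (-1:ℝ)^i * iteratedDerivWithin i f (Set.Icc 0 1) (1 - u)) (Set.Icc 0 1) :=
        fun u hu' => ih (by omega) u hu'
      rw [derivWithin_congr hEq (hEq ht)]
      have hd1 : DifferentiableWithinAt ℝ (iteratedDerivWithin i f (Set.Icc 0 1))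
          (Set.Icc 0 1) (1 - t) :=
        (hf.differentiableOn_iteratedDerivWithin (by exact_mod_cast (by omega : i < r)) hu)
          _ hmem
      have h1 : HasDerivWithinAt (iteratedDerivWithin i f (Set.Icc 0 1))
          (iteratedDerivWithin (i+1) f (Set.Icc 0 1) (1 - t)) (Set.Icc 0 1) (1 - t) := by
        have h := hd1.hasDerivWithinAt
        rwa [← iteratedDerivWithin_succ] at h
      have h2 : HasDerivWithinAt (fun u : ℝ => 1 - u) (-1) (Set.Icc 0 1) t := by
        simpa using (hasDerivWithinAt_id t (Set.Icc (0:ℝ) 1)).const_sub 1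
      have hmaps : Set.MapsTo (fun u : ℝ => 1 - u) (Set.Icc (0:ℝ) 1) (Set.Icc (0:ℝ) 1) := by
        intro u hu'
        simp only [Set.mem_Icc] at *
        constructor <;> linarith [hu'.1, hu'.2]
      have h3 := (h1.comp t h2 hmaps).const_mul ((-1:ℝ)^i)
      have h4 : HasDerivWithinAt
          (fun u : ℝ => (-1:ℝ)^i * iteratedDerivWithin i f (Set.Icc 0 1) (1 - u))
          ((-1:ℝ)^i * (iteratedDerivWithin (i+1) f (Set.Icc 0 1) (1 - t) * -1))
          (Set.Icc 0 1) t := by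
        simpa [Function.comp] using h3
      rw [h4.derivWithin (hu t ht)]
      ring

lemma moc_reflect {G g : ℝ → ℝ} {r : ℕ} (δ : ℝ)
    (hG : ∀ t ∈ Set.Icc (0:ℝ) 1, G t = (-1:ℝ)^r * g (1 - t)) :
    modulusOfContinuity G δ = modulusOfContinuity g δ := by
  have hmem : ∀ u : ℝ, u ∈ Set.Icc (0:ℝ) 1 → (1:ℝ) - u ∈ Set.Icc (0:ℝ) 1 :=
    fun u hu' => Set.mem_Icc.2
      ⟨by linarith [(Set.mem_Icc.1 hu').2], by linarith [(Set.mem_Icc.1 hu').1]⟩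
  unfold modulusOfContinuity
  congr 1
  ext d
  constructor
  · rintro ⟨u, hu, v, hv, hd, rfl⟩
    refine ⟨1 - u, hmem u hu, 1 - v, hmem v hv, ?_, ?_⟩
    · rw [show (1:ℝ) - u - (1 - v) = -(u - v) by ring, abs_neg]; exact hd
    · rw [hG u hu, hG v hv, ← mul_sub, abs_mul, abs_pow, abs_neg, abs_one, one_pow, one_mul]
  · rintro ⟨u, hu, v, hv, hd, rfl⟩
    refine ⟨1 - u, hmem u hu, 1 - v, hmem v hv, ?_, ?_⟩
    · rw [show (1:ℝ) - u - (1 - v) = -(u - v) by ring, abs_neg]; exact hd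
    · rw [hG (1-u) (hmem u hu), hG (1-v) (hmem v hv), show (1:ℝ) - (1 - u) = u by ring,
        show (1:ℝ) - (1 - v) = v by ring, ← mul_sub, abs_mul, abs_pow, abs_neg, abs_one,
        one_pow, one_mul]

lemma keyFull {f : ℝ → ℝ} {r : ℕ} (hf : ContDiffOn ℝ r f (Set.Icc 0 1))
    {C : ℝ} (hC : ∀ u ∈ Set.Icc (0:ℝ) 1, |iteratedDerivWithin r f (Set.Icc 0 1) u| ≤ C)
    {δ : ℝ} (hδ : 0 < δ) {a x : ℝ} (ha : a ∈ Set.Icc (0:ℝ) 1) (hx : x ∈ Set.Icc (0:ℝ) 1) :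
    |f x - ∑ i ∈ Finset.range (r+1),
        iteratedDerivWithin i f (Set.Icc 0 1) a / (i.factorial : ℝ) * (x - a)^i| ≤
      (1 + |x - a| / δ) * modulusOfContinuity (iteratedDerivWithin r f (Set.Icc 0 1)) δ
        * |x - a|^r / (r.factorial : ℝ) := by
  rcases le_total a x with hax | hax
  · exact keyA hf hC hδ ha hx hax
  · set F : ℝ → ℝ := fun s => f (1 - s) with hF
    have hmem : ∀ u : ℝ, u ∈ Set.Icc (0:ℝ) 1 → (1:ℝ) - u ∈ Set.Icc (0:ℝ) 1 :=
      fun u hu' => Set.mem_Icc.2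
        ⟨by linarith [(Set.mem_Icc.1 hu').2], by linarith [(Set.mem_Icc.1 hu').1]⟩
    have hFd : ContDiffOn ℝ r F (Set.Icc 0 1) := by
      apply hf.comp ((contDiff_const.sub contDiff_id).contDiffOn)
      exact fun u hu' => hmem u hu'
    have hrefl := reflect_iter hf
    have hGC : ∀ u ∈ Set.Icc (0:ℝ) 1, |iteratedDerivWithin r F (Set.Icc 0 1) u| ≤ C := by
      intro u hu'
      rw [hrefl r le_rfl u hu', abs_mul, abs_pow, abs_neg, abs_one, one_pow, one_mul]
      exact hC _ (hmem u hu')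
    have h1 := keyA hFd hGC hδ (hmem a ha) (hmem x hx) (by linarith)
    have hmoc : modulusOfContinuity (iteratedDerivWithin r F (Set.Icc 0 1)) δ
        = modulusOfContinuity (iteratedDerivWithin r f (Set.Icc 0 1)) δ :=
      moc_reflect δ (fun t ht => hrefl r le_rfl t ht)
    have hsum : ∀ i ∈ Finset.range (r+1),
        iteratedDerivWithin i F (Set.Icc 0 1) (1 - a) / (i.factorial : ℝ)
            * ((1 - x) - (1 - a))^i
          = iteratedDerivWithin i f (Set.Icc 0 1) a / (i.factorial : ℝ) * (x - a)^i := by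
      intro i hi
      rw [Finset.mem_range] at hi
      rw [hrefl i (by omega) (1 - a) (hmem a ha), show (1:ℝ) - (1 - a) = a by ring,
        show (1:ℝ) - x - (1 - a) = -(x - a) by ring]
      have hone : (-1:ℝ)^i * (-1:ℝ)^i = 1 := by rw [← mul_pow]; norm_num
      have hneg : (-(x - a) : ℝ)^i = (-1:ℝ)^i * (x - a)^i := by
        rw [neg_eq_neg_one_mul, mul_pow]
      calc (-1:ℝ)^i * iteratedDerivWithin i f (Set.Icc 0 1) a / (i.factorial : ℝ)
            * (-(x - a))^i
          = ((-1:ℝ)^i * (-1:ℝ)^i)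
            * (iteratedDerivWithin i f (Set.Icc 0 1) a / (i.factorial : ℝ) * (x - a)^i) := by
            rw [hneg]; ring
        _ = iteratedDerivWithin i f (Set.Icc 0 1) a / (i.factorial : ℝ) * (x - a)^i := by
            rw [hone, one_mul]
    calc |f x - ∑ i ∈ Finset.range (r+1),
          iteratedDerivWithin i f (Set.Icc 0 1) a / (i.factorial : ℝ) * (x - a)^i|
        = |F (1 - x) - ∑ i ∈ Finset.range (r+1),
            iteratedDerivWithin i F (Set.Icc 0 1) (1 - a) / (i.factorial : ℝ)
              * ((1 - x) - (1 - a))^i| := by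
          rw [Finset.sum_congr rfl hsum, show F (1 - x) = f x by rw [hF]; simp]
      _ ≤ (1 + |(1 - x) - (1 - a)| / δ)
            * modulusOfContinuity (iteratedDerivWithin r F (Set.Icc 0 1)) δ
            * |(1 - x) - (1 - a)|^r / (r.factorial : ℝ) := h1
      _ = (1 + |x - a| / δ) * modulusOfContinuity (iteratedDerivWithin r f (Set.Icc 0 1)) δ
            * |x - a|^r / (r.factorial : ℝ) := by
          rw [hmoc, show (1:ℝ) - x - (1 - a) = -(x - a) by ring, abs_neg]

section main
variable {p q : ℝ} (hq : 0 < q) (hqp : q < p)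
include hq hqp

lemma pqNode_mem {n k : ℕ} (hn : 1 ≤ n) (hk : k ≤ n) : pqNode p q n k ∈ Set.Icc (0:ℝ) 1 := by
  have hp0 : 0 < p := hq.trans hqp
  have hn0 : 0 < pqInt p q n := pqInt_pos hq hqp hn
  have hpq : (0:ℝ) < p - q := by linarith
  rw [pqNode, Set.mem_Icc]
  constructor
  · exact div_nonneg (mul_nonneg (by positivity) (pqInt_nonneg hq hqp k)) hn0.le
  · rw [div_le_one hn0, pqInt, pqInt, ← mul_div_assoc, div_le_div_iff₀ hpq hpq]
    have h1 : p^(n-k) * p^k = p^n := by rw [← pow_add]; congr 1; omega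
    have h2 : q^(n-k) * q^k = q^n := by rw [← pow_add]; congr 1; omega
    have h3 : q^(n-k) ≤ p^(n-k) := pow_le_pow_left₀ hq.le hqp.le _
    have h4 : q^(n-k) * q^k ≤ p^(n-k) * q^k :=
      mul_le_mul_of_nonneg_right h3 (pow_nonneg hq.le k)
    nlinarith [pow_nonneg hq.le k, pow_pos hp0 (n-k), pow_pos hp0 k]

lemma pqBern_nonneg (n k : ℕ) {x : ℝ} (hx : x ∈ Set.Icc (0:ℝ) 1) : 0 ≤ pqBern p q n k x := by
  have hp0 : 0 < p := hq.trans hqp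
  rw [pqBern]
  apply mul_nonneg (mul_nonneg (mul_nonneg (by positivity) (pqBinom_pos hq hqp n k).le)
    (pow_nonneg hx.1 k))
  apply Finset.prod_nonneg
  intro s _
  have h1 : q^s * x ≤ q^s * 1 := mul_le_mul_of_nonneg_left hx.2 (pow_nonneg hq.le s)
  have h2 : q^s ≤ p^s := pow_le_pow_left₀ hq.le hqp.le s
  linarith

end main


/-- `|B^{[r]}_{n,p,q}(f;x) - f(x)| ≤ (1/r!) ω(f^{(r)}; [n]^{-1/2})
([n]^{1/2} B_{n,p,q}(|t-x|^{r+1};x) + B_{n,p,q}(|t-x|^r;x))`. -/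
theorem pq_bernsteinR_approx (r : ℕ) (f : ℝ → ℝ) (hf : ContDiffOn ℝ r f (Set.Icc 0 1))
    (n : ℕ) (hn : 1 ≤ n) (p q : ℝ) (hq : 0 < q) (hqp : q < p) (hp : p ≤ 1)
    (x : ℝ) (hx : x ∈ Set.Icc (0 : ℝ) 1) :
    |pqBernsteinR p q n r f x - f x| ≤
      (1 / (r.factorial : ℝ)) *
        modulusOfContinuity (iteratedDerivWithin r f (Set.Icc 0 1))
          (1 / Real.sqrt (pqInt p q n)) *
        (Real.sqrt (pqInt p q n) * pqAbsMoment p q n (r + 1) x + pqAbsMoment p q n r x) := by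
  have hp0 : 0 < p := hq.trans hqp
  have hu2 : UniqueDiffOn ℝ (Set.Icc (0:ℝ) 1) := uniqueDiffOn_Icc one_pos
  obtain ⟨C, hC⟩ : ∃ C, ∀ u ∈ Set.Icc (0:ℝ) 1,
      |iteratedDerivWithin r f (Set.Icc 0 1) u| ≤ C := by
    obtain ⟨C, hC⟩ := isCompact_Icc.exists_bound_of_continuousOn
      (hf.continuousOn_iteratedDerivWithin le_rfl hu2)
    exact ⟨C, fun u hu => by simpa [Real.norm_eq_abs] using hC u hu⟩
  have hn0 : 0 < pqInt p q n := pqInt_pos hq hqp hn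
  have hs0 : 0 < Real.sqrt (pqInt p q n) := Real.sqrt_pos.2 hn0
  have hδ : 0 < 1 / Real.sqrt (pqInt p q n) := by positivity
  set s : ℝ := Real.sqrt (pqInt p q n) with hsdef
  set ω : ℝ := modulusOfContinuity (iteratedDerivWithin r f (Set.Icc 0 1)) (1 / s) with hωdef
  have hω0 : 0 ≤ ω := moc_nonneg hC hδ.le
  have hN0 : (0:ℝ) < p ^ (n * (n - 1) / 2) := by positivity
  have hfac : (0:ℝ) < (r.factorial : ℝ) := by positivity
  have hnode : ∀ k ∈ Finset.range (n+1), pqNode p q n k ∈ Set.Icc (0:ℝ) 1 := by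
    intro k hk
    have hk' := Finset.mem_range.1 hk
    exact pqNode_mem hq hqp hn (by omega)
  have hbern : ∀ k ∈ Finset.range (n+1), 0 ≤ pqBern p q n k x :=
    fun k _ => pqBern_nonneg hq hqp n k hx
  have hterm : ∀ k ∈ Finset.range (n+1),
      |(∑ i ∈ Finset.range (r+1),
          iteratedDerivWithin i f (Set.Icc 0 1) (pqNode p q n k) / (i.factorial : ℝ) *
            (x - pqNode p q n k) ^ i) - f x|
        ≤ ω / (r.factorial : ℝ) *
            (|pqNode p q n k - x| ^ r + s * |pqNode p q n k - x| ^ (r+1)) := by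
    intro k hk
    have h := keyFull hf hC hδ (hnode k hk) hx
    rw [abs_sub_comm]
    refine le_trans h (le_of_eq ?_)
    have hd : |x - pqNode p q n k| = |pqNode p q n k - x| := abs_sub_comm _ _
    rw [hd]
    have hdiv : |pqNode p q n k - x| / (1 / s) = |pqNode p q n k - x| * s := by
      field_simp
    rw [hdiv, pow_succ]
    field_simp
    ring
  have hsum := sum_pqBern hq hqp (p := p) (q := q) n x
  have hexpand : pqBernsteinR p q n r f x - f x
      = (p ^ (n * (n - 1) / 2) : ℝ)⁻¹ *
          ∑ k ∈ Finset.range (n+1), pqBern p q n k x *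
            ((∑ i ∈ Finset.range (r+1),
              iteratedDerivWithin i f (Set.Icc 0 1) (pqNode p q n k) / (i.factorial : ℝ) *
                (x - pqNode p q n k) ^ i) - f x) := by
    rw [pqBernsteinR]
    have e1 : f x = (p ^ (n * (n - 1) / 2) : ℝ)⁻¹ *
        ∑ k ∈ Finset.range (n+1), pqBern p q n k x * f x := by
      rw [← Finset.sum_mul, hsum, ← mul_assoc, inv_mul_cancel₀ hN0.ne', one_mul]
    rw [show ∀ A B : ℝ, A - B = A - B from fun _ _ => rfl]
    conv_lhs => rw [e1]
    rw [← mul_sub, ← Finset.sum_sub_distrib]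
    congr 1
    refine Finset.sum_congr rfl fun k _ => ?_
    ring
  rw [hexpand, abs_mul, abs_of_pos (inv_pos.2 hN0)]
  calc (p ^ (n * (n - 1) / 2) : ℝ)⁻¹ * |∑ k ∈ Finset.range (n+1), pqBern p q n k x *
          ((∑ i ∈ Finset.range (r+1),
            iteratedDerivWithin i f (Set.Icc 0 1) (pqNode p q n k) / (i.factorial : ℝ) *
              (x - pqNode p q n k) ^ i) - f x)|
      ≤ (p ^ (n * (n - 1) / 2) : ℝ)⁻¹ * ∑ k ∈ Finset.range (n+1), pqBern p q n k x *
          (ω / (r.factorial : ℝ) *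
            (|pqNode p q n k - x| ^ r + s * |pqNode p q n k - x| ^ (r+1))) := by
        refine mul_le_mul_of_nonneg_left ?_ (inv_pos.2 hN0).le
        refine le_trans (Finset.abs_sum_le_sum_abs _ _) (Finset.sum_le_sum fun k hk => ?_)
        rw [abs_mul, abs_of_nonneg (hbern k hk)]
        exact mul_le_mul_of_nonneg_left (hterm k hk) (hbern k hk)
    _ = (1 / (r.factorial : ℝ)) * ω *
          (s * pqAbsMoment p q n (r + 1) x + pqAbsMoment p q n r x) := by
        simp only [pqAbsMoment, Finset.mul_sum, mul_add]
        rw [← Finset.sum_add_distrib]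
        refine Finset.sum_congr rfl fun k _ => ?_
        ring
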